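/- Let {N_{β0β1}}_{β0,β1∈{0,1}} be a POVM on ℂ² (i.e., each N_{β0β1} is positive semidefinite and they sum to the identity), and define B0 = N_{00} + N_{01} − N_{10} − N_{11} and B1 = N_{00} − N_{01} + N_{10} − N_{11}. Then (1/2)·[Tr(X·B1) + Tr(Z·B0)] ≤ √2. -/

import Mathlib

open Matrix ComplexOrder

lemma star_mul_self_re_nonneg (z : ℂ) : 0 ≤ (star z * z).re := by
  rw [Complex.star_def, ← Complex.normSq_eq_conj_mul_self, Complex.ofReal_re]
  exact Complex.normSq_nonneg z

lemma tr_nn (D : Matrix (Fin 2) (Fin 2) ℂ) : 0 ≤ (Dᴴ * D).trace.re := by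
  simp only [Matrix.trace, Matrix.diag, Matrix.mul_apply, Matrix.conjTranspose_apply,
    Fin.sum_univ_succ, Fin.sum_univ_zero, add_zero, Complex.add_re]
  have h := star_mul_self_re_nonneg
  exact add_nonneg (add_nonneg (h _) (h _)) (add_nonneg (h _) (h _))

lemma key {M Nm : Matrix (Fin 2) (Fin 2) ℂ} (hM : M.IsHermitian)
    (hM2 : M * M = (2 : ℂ) • 1) (hN : Nm.PosSemidef) :
    (M * Nm).trace.re ≤ Real.sqrt 2 * Nm.trace.re := by
  suffices h : ∀ s : ℝ, 0 < s → (s:ℂ) * s = 2 →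
      (M * Nm).trace.re ≤ s * Nm.trace.re by
    refine h _ (Real.sqrt_pos.mpr (by norm_num)) ?_
    rw [← Complex.ofReal_mul, Real.mul_self_sqrt (by norm_num : (0:ℝ) ≤ 2)]
    norm_num
  intro s hspos hs2
  obtain ⟨C, rfl⟩ : ∃ C : Matrix (Fin 2) (Fin 2) ℂ, Nm = Cᴴ * C := by
    open scoped MatrixOrder Matrix.Norms.L2Operator in
    exact CStarAlgebra.nonneg_iff_eq_star_mul_self.mp hN.nonneg
  set A : Matrix (Fin 2) (Fin 2) ℂ := (s : ℂ) • 1 - M with hA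
  have hAh : Aᴴ = A := by
    rw [hA]
    simp [Matrix.conjTranspose_smul, hM.eq, Complex.star_def, Complex.conj_ofReal]
  have hAA : A * A = (2 * (s:ℂ)) • A := by
    rw [hA]
    simp only [Matrix.sub_mul, Matrix.mul_sub, Matrix.smul_mul, Matrix.mul_smul,
      Matrix.one_mul, Matrix.mul_one, hM2]
    match_scalars
    · linear_combination -hs2
    · ring
  have h2 : 0 ≤ ((C * A)ᴴ * (C * A)).trace.re := tr_nn _
  have htr : ((C * A)ᴴ * (C * A)).trace = (A * A * (Cᴴ * C)).trace := by
    rw [Matrix.conjTranspose_mul,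
      show Aᴴ * Cᴴ * (C * A) = Aᴴ * (Cᴴ * C * A) by noncomm_ring,
      Matrix.trace_mul_comm,
      show Cᴴ * C * A * Aᴴ = Cᴴ * C * (A * Aᴴ) by noncomm_ring, hAh,
      Matrix.trace_mul_comm]
  rw [htr, hAA, Matrix.smul_mul, Matrix.trace_smul, smul_eq_mul, Complex.mul_re] at h2
  have hre : (2 * (s:ℂ)).re = 2 * s := by simp
  have him : (2 * (s:ℂ)).im = 0 := by simp
  rw [hre, him] at h2
  have h0 : 0 ≤ (A * (Cᴴ * C)).trace.re := by nlinarith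
  have hexp : (A * (Cᴴ * C)).trace = (s:ℂ) * (Cᴴ * C).trace - (M * (Cᴴ * C)).trace := by
    rw [hA, Matrix.sub_mul, Matrix.trace_sub, Matrix.smul_mul, Matrix.one_mul,
      Matrix.trace_smul, smul_eq_mul]
  rw [hexp] at h0
  simp only [Complex.sub_re, Complex.mul_re, Complex.ofReal_re, Complex.ofReal_im,
    zero_mul, sub_zero] at h0
  linarith

/-- Joint-measurability inequality: if `B0`, `B1` are marginals of a four-outcome
POVM on ℂ², then `(1/2)[Tr(X·B1) + Tr(Z·B0)] ≤ √2`. -/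
theorem stmt3 (N : Fin 2 → Fin 2 → Matrix (Fin 2) (Fin 2) ℂ)
    (hpos : ∀ i j, (N i j).PosSemidef)
    (hsum : N 0 0 + N 0 1 + N 1 0 + N 1 1 = 1) :
    (1 / 2 : ℝ) *
      (((!![0, 1; 1, 0] : Matrix (Fin 2) (Fin 2) ℂ) *
          (N 0 0 - N 0 1 + N 1 0 - N 1 1)).trace +
       ((!![1, 0; 0, -1] : Matrix (Fin 2) (Fin 2) ℂ) *
          (N 0 0 + N 0 1 - N 1 0 - N 1 1)).trace).re
      ≤ Real.sqrt 2 := by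
  set X : Matrix (Fin 2) (Fin 2) ℂ := !![0, 1; 1, 0] with hX
  set Z : Matrix (Fin 2) (Fin 2) ℂ := !![1, 0; 0, -1] with hZ
  have herm1 : (X + Z).IsHermitian := by
    unfold Matrix.IsHermitian
    ext i j; fin_cases i <;> fin_cases j <;>
      simp [hX, hZ, Matrix.conjTranspose_apply, Matrix.add_apply]
  have herm2 : (Z - X).IsHermitian := by
    unfold Matrix.IsHermitian
    ext i j; fin_cases i <;> fin_cases j <;>
      simp [hX, hZ, Matrix.conjTranspose_apply, Matrix.sub_apply]
  have herm3 : (X - Z).IsHermitian := by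
    unfold Matrix.IsHermitian
    ext i j; fin_cases i <;> fin_cases j <;>
      simp [hX, hZ, Matrix.conjTranspose_apply, Matrix.sub_apply]
  have herm4 : (-X - Z).IsHermitian := by
    unfold Matrix.IsHermitian
    ext i j; fin_cases i <;> fin_cases j <;>
      simp [hX, hZ, Matrix.conjTranspose_apply, Matrix.sub_apply, Matrix.neg_apply]
  have sq1 : (X + Z) * (X + Z) = (2 : ℂ) • 1 := by
    ext i j; fin_cases i <;> fin_cases j <;>
      simp [hX, hZ, Matrix.mul_apply, Fin.sum_univ_succ, Matrix.add_apply,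
        Matrix.smul_apply, Matrix.one_apply] <;> norm_num
  have sq2 : (Z - X) * (Z - X) = (2 : ℂ) • 1 := by
    ext i j; fin_cases i <;> fin_cases j <;>
      simp [hX, hZ, Matrix.mul_apply, Fin.sum_univ_succ, Matrix.sub_apply,
        Matrix.smul_apply, Matrix.one_apply] <;> norm_num
  have sq3 : (X - Z) * (X - Z) = (2 : ℂ) • 1 := by
    ext i j; fin_cases i <;> fin_cases j <;>
      simp [hX, hZ, Matrix.mul_apply, Fin.sum_univ_succ, Matrix.sub_apply,
        Matrix.smul_apply, Matrix.one_apply] <;> norm_num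
  have sq4 : (-X - Z) * (-X - Z) = (2 : ℂ) • 1 := by
    ext i j; fin_cases i <;> fin_cases j <;>
      simp [hX, hZ, Matrix.mul_apply, Fin.sum_univ_succ, Matrix.sub_apply,
        Matrix.neg_apply, Matrix.smul_apply, Matrix.one_apply] <;> norm_num
  have k1 := key herm1 sq1 (hpos 0 0)
  have k2 := key herm2 sq2 (hpos 0 1)
  have k3 := key herm3 sq3 (hpos 1 0)
  have k4 := key herm4 sq4 (hpos 1 1)
  have hrearr :
      (X * (N 0 0 - N 0 1 + N 1 0 - N 1 1)).trace +
        (Z * (N 0 0 + N 0 1 - N 1 0 - N 1 1)).trace =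
      ((X + Z) * N 0 0).trace + ((Z - X) * N 0 1).trace +
        ((X - Z) * N 1 0).trace + ((-X - Z) * N 1 1).trace := by
    simp only [Matrix.mul_add, Matrix.mul_sub, Matrix.add_mul, Matrix.sub_mul,
      Matrix.neg_mul, Matrix.trace_add, Matrix.trace_sub, Matrix.trace_neg]
    ring
  have htrsum : (N 0 0).trace.re + (N 0 1).trace.re + (N 1 0).trace.re +
      (N 1 1).trace.re = 2 := by
    have := congrArg Matrix.trace hsum
    rw [Matrix.trace_add, Matrix.trace_add, Matrix.trace_add, Matrix.trace_one] at this
    have := congrArg Complex.re this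
    simpa using this
  rw [hrearr]
  simp only [Complex.add_re]
  have hs2 : (0:ℝ) ≤ Real.sqrt 2 := Real.sqrt_nonneg 2
  nlinarith [k1, k2, k3, k4, htrsum]
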